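/- In the original four-valued ordered-pair semantics (n = 2), the four-valued tolerant consequence relation ⊨₃ (with designated values {⟨1,1⟩, ⟨1,0⟩, ⟨0,1⟩}) coincides with LP consequence ⊨_LP on propositional formulas. -/

import Mathlib

/-- Helper instance so that instance search for the lexicographic order does not get stuck. -/
instance (n : ℕ) : WellFoundedLT (Fin n) := inferInstance

/-- `2^n`: the `n`-fold product of the two-element Boolean algebra `2 = {0,1}` (as `Bool`,
with `false = 0`, `true = 1`), carrying the lexicographic order. -/
abbrev Tup (n : ℕ) := Lex (Fin n → Bool)

/-- The componentwise complement `-⟨x₁,…,xₙ⟩ = ⟨1-x₁,…,1-xₙ⟩` on `2^n`. -/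
def tneg {n : ℕ} (x : Tup n) : Tup n := toLex fun i => !(ofLex x i)

/-- The top value `⟨1,…,1⟩` of `2^n`. -/
def tTop (n : ℕ) : Tup n := toLex fun _ => true

/-- The bottom value `⟨0,…,0⟩` of `2^n`. -/
def tBot (n : ℕ) : Tup n := toLex fun _ => false

/-- Propositional formulas over connectives `¬`, `∧`, `∨`. -/
inductive PropForm where
  | var : ℕ → PropForm
  | neg : PropForm → PropForm
  | conj : PropForm → PropForm → PropForm
  | disj : PropForm → PropForm → PropForm

/-- The Clemens extension of an `n`-interpretation `v` of the propositional variables: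
`¬` is componentwise complement, `∧` and `∨` are lexicographic min and max. -/
noncomputable def evalT {n : ℕ} (v : ℕ → Tup n) : PropForm → Tup n
  | .var p => v p
  | .neg A => tneg (evalT v A)
  | .conj A B => min (evalT v A) (evalT v B)
  | .disj A B => max (evalT v A) (evalT v B)

/-- The three truth values `f < i < t` (i.e. `0 < 1/2 < 1`). -/
inductive V3 where
  | f | i | t
deriving DecidableEq

instance : Fintype V3 := ⟨{V3.f, V3.i, V3.t}, fun x => by cases x <;> simp⟩

def V3.toFin : V3 → Fin 3
  | .f => 0 | .i => 1 | .t => 2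

instance : LinearOrder V3 := LinearOrder.lift' V3.toFin (by decide)

/-- Three-valued negation: `1 - x`. -/
def V3.negv : V3 → V3
  | .t => .f | .i => .i | .f => .t

/-- The strong Kleene / LP extension of a three-valued interpretation of the
propositional variables. -/
def eval3 (v : ℕ → V3) : PropForm → V3
  | .var p => v p
  | .neg A => (eval3 v A).negv
  | .conj A B => min (eval3 v A) (eval3 v B)
  | .disj A B => max (eval3 v A) (eval3 v B)

/-- The ordered pair `⟨a, b⟩` as an element of `2²`. -/
def pair (a b : Bool) : Tup 2 := toLex ![a, b]

/-! ### Auxiliary machinery -/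

/-- The collapse map `2² → V3` sending ⟨1,1⟩ ↦ t, ⟨0,0⟩ ↦ f, and the middle values to i. -/
def phi (x : Tup 2) : V3 :=
  match ofLex x 0, ofLex x 1 with
  | true, true => .t
  | false, false => .f
  | _, _ => .i

/-- A section of `phi`. -/
def psi : V3 → Tup 2
  | .t => pair true true
  | .i => pair true false
  | .f => pair false false

lemma ofLex_pair₀ (a b : Bool) : ofLex (pair a b) 0 = a := rfl
lemma ofLex_pair₁ (a b : Bool) : ofLex (pair a b) 1 = b := rfl

lemma pair_ext (x : Tup 2) : x = pair (ofLex x 0) (ofLex x 1) := by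
  have : ofLex x = ![ofLex x 0, ofLex x 1] := by
    funext i; fin_cases i <;> rfl
  calc x = toLex (ofLex x) := rfl
    _ = pair (ofLex x 0) (ofLex x 1) := by rw [this]; rfl

lemma phi_mono : Monotone phi := by
  intro x y h
  rcases eq_or_lt_of_le h with rfl | h
  · exact le_rfl
  · obtain ⟨i, hj, hi⟩ := h
    fin_cases i
    · rcases Bool.lt_iff.mp hi with ⟨h0, h1⟩
      have h0' : ofLex x 0 = false := h0
      have h1' : ofLex y 0 = true := h1
      unfold phi
      rw [h0', h1']
      rcases ofLex x 1 <;> rcases ofLex y 1 <;> decide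
    · have h0 : ofLex x 0 = ofLex y 0 := hj 0 (by decide)
      rcases Bool.lt_iff.mp hi with ⟨h1, h2⟩
      have h1' : ofLex x 1 = false := h1
      have h2' : ofLex y 1 = true := h2
      unfold phi
      rw [h0, h1', h2']
      rcases ofLex y 0 <;> decide

lemma phi_tneg (x : Tup 2) : phi (tneg x) = (phi x).negv := by
  have h0 : ofLex (tneg x) 0 = !(ofLex x 0) := rfl
  have h1 : ofLex (tneg x) 1 = !(ofLex x 1) := rfl
  unfold phi
  rw [h0, h1]
  rcases ofLex x 0 <;> rcases ofLex x 1 <;> rfl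

lemma phi_psi (a : V3) : phi (psi a) = a := by rcases a <;> rfl

lemma phi_evalT (v : ℕ → Tup 2) (F : PropForm) :
    phi (evalT v F) = eval3 (fun p => phi (v p)) F := by
  induction F with
  | var p => rfl
  | neg A ih => rw [evalT, eval3, phi_tneg, ih]
  | conj A B ihA ihB => rw [evalT, eval3, phi_mono.map_min, ihA, ihB]
  | disj A B ihA ihB => rw [evalT, eval3, phi_mono.map_max, ihA, ihB]

lemma designated_iff (x : Tup 2) :
    x ∈ ({pair true true, pair true false, pair false true} : Set (Tup 2)) ↔ phi x ≠ .f := by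
  constructor
  · rintro (rfl | rfl | rfl) <;> decide
  · intro h
    rw [pair_ext x]
    rw [pair_ext x] at h
    simp only [Set.mem_insert_iff, Set.mem_singleton_iff]
    rcases ha : ofLex x 0 <;> rcases hb : ofLex x 1 <;> rw [ha, hb] at h
    · exact absurd (by decide) h
    · right; right; rfl
    · right; left; rfl
    · left; rfl

lemma designated3_iff (a : V3) : a ∈ ({V3.t, V3.i} : Set V3) ↔ a ≠ .f := by
  rcases a <;> simp

/-- in the original four-valued ordered-pair semantics (`n = 2`), the
tolerant consequence relation `⊨₃` with designated values `{⟨1,1⟩, ⟨1,0⟩, ⟨0,1⟩}`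
coincides with LP consequence `⊨_LP` (designated values `{t, i}`) on propositional
formulas. -/
theorem fourValued_iff_LP (Γ : Set PropForm) (A : PropForm) :
    (∀ v : ℕ → Tup 2,
        (∀ B ∈ Γ, evalT v B ∈ ({pair true true, pair true false, pair false true} :
          Set (Tup 2))) →
        evalT v A ∈ ({pair true true, pair true false, pair false true} : Set (Tup 2))) ↔
    (∀ v3 : ℕ → V3,
        (∀ B ∈ Γ, eval3 v3 B ∈ ({V3.t, V3.i} : Set V3)) →
        eval3 v3 A ∈ ({V3.t, V3.i} : Set V3)) := by
  constructor
  · intro h4 v3 hprem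
    have key : ∀ F, eval3 v3 F = phi (evalT (fun p => psi (v3 p)) F) := by
      intro F
      rw [phi_evalT]
      congr 1
      funext p
      rw [phi_psi]
    rw [designated3_iff, key]
    rw [← designated_iff]
    apply h4
    intro B hB
    rw [designated_iff, ← key]
    rw [← designated3_iff]
    exact hprem B hB
  · intro hLP v hprem
    rw [designated_iff, phi_evalT, ← designated3_iff]
    apply hLP
    intro B hB
    rw [designated3_iff, ← phi_evalT, ← designated_iff]
    exact hprem B hB
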